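/- For every ζ > 0, (2 + 3/ζ)·K₃(ζ)/K₂(ζ) < 2·(1 + 4/ζ + 6/ζ²); equivalently, setting θ = 1/ζ and G(ζ) := K₃(ζ)/K₂(ζ), one has (3θ+2)·G(1/θ) < 2·(6θ² + 4θ + 1) for every θ > 0. Here K_ν(ζ) := ∫₀^∞ cosh(νt)·exp(−ζ·cosh t) dt. -/

import Mathlib

open Real MeasureTheory Set Filter Topology

lemma my_cosh_ge (t : ℝ) (ht : 0 ≤ t) : t ^ 2 / 8 ≤ Real.cosh t := by
  have h1 : t / 2 ≤ Real.exp (t / 2) := by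
    have := Real.add_one_le_exp (t / 2); linarith
  have h2 : t ^ 2 / 4 ≤ Real.exp t := by
    have : (t / 2) ^ 2 ≤ Real.exp (t / 2) ^ 2 :=
      pow_le_pow_left₀ (by linarith) h1 2
    calc t ^ 2 / 4 = (t / 2) ^ 2 := by ring
      _ ≤ Real.exp (t / 2) ^ 2 := this
      _ = Real.exp (t / 2) * Real.exp (t / 2) := sq (Real.exp (t/2)) ▸ by ring
      _ = Real.exp t := by rw [← Real.exp_add]; norm_num
  have h3 : Real.exp t ≤ 2 * Real.cosh t := by
    rw [Real.cosh_eq]; have := Real.exp_pos (-t); linarith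
  linarith

lemma my_cosh_le (t : ℝ) (ht : 0 ≤ t) : Real.cosh t ≤ Real.exp t := by
  rw [Real.cosh_eq]
  have : Real.exp (-t) ≤ Real.exp t := Real.exp_le_exp.2 (by linarith)
  linarith

lemma my_abs_sinh_le (t : ℝ) : |Real.sinh t| ≤ Real.cosh t := by
  rw [abs_le]
  have h1 := Real.cosh_add_sinh t
  have h2 := Real.cosh_sub_sinh t
  have := Real.exp_pos t; have := Real.exp_pos (-t)
  constructor <;> linarith

lemma my_key_bound (ζ B : ℝ) (hζ : 0 < ζ) :
    ∀ᶠ t in atTop, Real.exp (B * t) * Real.exp (-ζ * Real.cosh t) ≤ Real.exp (-t) := by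
  filter_upwards [eventually_ge_atTop (max 1 (8 * (B + 1) / ζ))] with t ht
  have ht1 : (1 : ℝ) ≤ t := le_trans (le_max_left _ _) ht
  have ht0 : (0 : ℝ) ≤ t := by linarith
  have ht2 : 8 * (B + 1) / ζ ≤ t := le_trans (le_max_right _ _) ht
  have hkey : (B + 1) * t ≤ ζ * Real.cosh t := by
    rcases le_or_gt (B + 1) 0 with h | h
    · nlinarith [mul_pos hζ (Real.cosh_pos t), mul_nonneg (neg_nonneg.2 h) ht0]
    · have h8 : 8 * (B + 1) ≤ ζ * t := by rw [div_le_iff₀ hζ] at ht2; linarith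
      nlinarith [mul_le_mul_of_nonneg_left (my_cosh_ge t ht0) hζ.le,
        mul_nonneg (sub_nonneg.2 h8) ht0]
  rw [← Real.exp_add, Real.exp_le_exp]
  linarith

lemma my_integrable (ζ B C : ℝ) (hζ : 0 < ζ) (f : ℝ → ℝ) (hf : Continuous f)
    (hb : ∀ t, 0 ≤ t → |f t| ≤ C * Real.exp (B * t)) :
    IntegrableOn (fun t => f t * Real.exp (-ζ * Real.cosh t)) (Set.Ioi 0) := by
  have hC : 0 ≤ C := by
    have := hb 0 le_rfl
    simp only [mul_zero, Real.exp_zero, mul_one] at this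
    exact le_trans (abs_nonneg _) this
  refine integrable_of_isBigO_exp_neg one_pos
    ((hf.mul (Real.continuous_exp.comp (continuous_const.mul Real.continuous_cosh))).continuousOn) ?_
  apply Asymptotics.IsBigO.of_bound C
  filter_upwards [my_key_bound ζ B hζ, eventually_ge_atTop (0 : ℝ)] with t hkey ht0
  rw [Real.norm_eq_abs, Real.norm_eq_abs, abs_mul, abs_of_pos (Real.exp_pos _),
    abs_of_pos (Real.exp_pos _)]
  calc |f t| * Real.exp (-ζ * Real.cosh t)
      ≤ (C * Real.exp (B * t)) * Real.exp (-ζ * Real.cosh t) := by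
        apply mul_le_mul_of_nonneg_right (hb t ht0) (Real.exp_pos _).le
    _ = C * (Real.exp (B * t) * Real.exp (-ζ * Real.cosh t)) := by ring
    _ ≤ C * Real.exp (-t) := mul_le_mul_of_nonneg_left hkey hC
    _ = C * Real.exp (-1 * t) := by ring_nf

lemma my_tendsto (ζ B C : ℝ) (hζ : 0 < ζ) (f : ℝ → ℝ)
    (hb : ∀ t, 0 ≤ t → |f t| ≤ C * Real.exp (B * t)) :
    Tendsto (fun t => f t * Real.exp (-ζ * Real.cosh t)) atTop (𝓝 0) := by
  have hC : 0 ≤ C := by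
    have := hb 0 le_rfl
    simp only [mul_zero, Real.exp_zero, mul_one] at this
    exact le_trans (abs_nonneg _) this
  rw [tendsto_zero_iff_abs_tendsto_zero]
  apply squeeze_zero' (Eventually.of_forall fun t => abs_nonneg _)
  · filter_upwards [my_key_bound ζ B hζ, eventually_ge_atTop (0 : ℝ)] with t hkey ht0
    calc |f t * Real.exp (-ζ * Real.cosh t)|
        = |f t| * Real.exp (-ζ * Real.cosh t) := by
          rw [abs_mul, abs_of_pos (Real.exp_pos _)]
      _ ≤ (C * Real.exp (B * t)) * Real.exp (-ζ * Real.cosh t) :=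
          mul_le_mul_of_nonneg_right (hb t ht0) (Real.exp_pos _).le
      _ = C * (Real.exp (B * t) * Real.exp (-ζ * Real.cosh t)) := by ring
      _ ≤ C * Real.exp (-t) := mul_le_mul_of_nonneg_left hkey hC
  · have : Tendsto (fun t : ℝ => C * Real.exp (-t)) atTop (𝓝 (C * 0)) :=
      Real.tendsto_exp_neg_atTop_nhds_zero.const_mul C
    simpa using this


lemma my_int_pos (ζ : ℝ) (f : ℝ → ℝ) (hnn : ∀ t, 0 ≤ f t) (hpos : ∀ t, 0 < t → 0 < f t)
    (hint : IntegrableOn (fun t => f t * Real.exp (-ζ * Real.cosh t)) (Set.Ioi 0)) :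
    0 < ∫ t in Set.Ioi (0 : ℝ), f t * Real.exp (-ζ * Real.cosh t) := by
  rw [integral_pos_iff_support_of_nonneg
    (fun t => mul_nonneg (hnn t) (Real.exp_pos _).le) hint]
  have hsub : Set.Ioi (0 : ℝ) ⊆ Function.support fun t => f t * Real.exp (-ζ * Real.cosh t) :=
    fun t ht => ne_of_gt (mul_pos (hpos t ht) (Real.exp_pos _))
  calc (0 : ENNReal) < volume (Set.Ioi (0 : ℝ)) := by simp [Real.volume_Ioi]
    _ = (volume.restrict (Set.Ioi (0:ℝ))) (Set.Ioi (0:ℝ)) := by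
        rw [Measure.restrict_apply_self]
    _ ≤ _ := measure_mono hsub

lemma my_ibp (ζ : ℝ) (hζ : 0 < ζ) (g g' : ℝ → ℝ) (hg : ∀ t, HasDerivAt g (g' t) t)
    (hg0 : g 0 = 0) (hg'c : Continuous g') (B C : ℝ) (hC : 0 ≤ C)
    (hgb : ∀ t, 0 ≤ t → |g t| ≤ C * Real.exp (B * t))
    (hg'b : ∀ t, 0 ≤ t → |g' t| ≤ C * Real.exp (B * t)) :
    ∫ t in Set.Ioi (0 : ℝ), g' t * Real.exp (-ζ * Real.cosh t)
      = ζ * ∫ t in Set.Ioi (0 : ℝ), (g t * Real.sinh t) * Real.exp (-ζ * Real.cosh t) := by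
  have hgc : Continuous g := continuous_iff_continuousAt.2 fun t => (hg t).continuousAt
  -- bound on the product g t * sinh t
  have hprod : ∀ t, 0 ≤ t → |g t * Real.sinh t| ≤ (C * (1 + ζ)) * Real.exp ((B + 1) * t) := by
    intro t ht
    have h1 : |g t * Real.sinh t| ≤ (C * Real.exp (B * t)) * Real.exp t := by
      rw [abs_mul]
      apply mul_le_mul (hgb t ht) ((my_abs_sinh_le t).trans (my_cosh_le t ht))
        (abs_nonneg _) (by positivity)
    calc |g t * Real.sinh t| ≤ (C * Real.exp (B * t)) * Real.exp t := h1
      _ = C * Real.exp ((B + 1) * t) := by rw [mul_assoc, ← Real.exp_add]; ring_nf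
      _ ≤ (C * (1 + ζ)) * Real.exp ((B + 1) * t) := by nlinarith [mul_nonneg (mul_nonneg hC hζ.le) (Real.exp_pos ((B+1)*t)).le]
  -- derivative of F
  have hF : ∀ t, HasDerivAt (fun t => g t * Real.exp (-ζ * Real.cosh t))
      ((g' t - ζ * (g t * Real.sinh t)) * Real.exp (-ζ * Real.cosh t)) t := by
    intro t
    have h1 : HasDerivAt (fun t : ℝ => Real.exp (-ζ * Real.cosh t))
        (-ζ * Real.sinh t * Real.exp (-ζ * Real.cosh t)) t := by
      have := ((Real.hasDerivAt_cosh t).const_mul (-ζ)).exp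
      convert this using 1; ring
    have := (hg t).mul h1
    exact this.congr_deriv (by ring)
  -- integrability of pieces
  have ig' : IntegrableOn (fun t => g' t * Real.exp (-ζ * Real.cosh t)) (Set.Ioi 0) :=
    my_integrable ζ B C hζ g' hg'c hg'b
  have igs : IntegrableOn (fun t => (g t * Real.sinh t) * Real.exp (-ζ * Real.cosh t))
      (Set.Ioi 0) :=
    my_integrable ζ (B + 1) (C * (1 + ζ)) hζ _ (hgc.mul Real.continuous_sinh) hprod
  have iF' : IntegrableOn
      (fun t => (g' t - ζ * (g t * Real.sinh t)) * Real.exp (-ζ * Real.cosh t)) (Set.Ioi 0) := by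
    have : (fun t => (g' t - ζ * (g t * Real.sinh t)) * Real.exp (-ζ * Real.cosh t))
        = fun t => g' t * Real.exp (-ζ * Real.cosh t)
            - ζ * ((g t * Real.sinh t) * Real.exp (-ζ * Real.cosh t)) := by
      funext t; ring
    rw [this]
    exact ig'.sub (igs.const_mul ζ)
  -- FTC
  have h0 : ∫ t in Set.Ioi (0 : ℝ),
      (g' t - ζ * (g t * Real.sinh t)) * Real.exp (-ζ * Real.cosh t) = 0 := by
    have := integral_Ioi_of_hasDerivAt_of_tendsto
      (f := fun t => g t * Real.exp (-ζ * Real.cosh t))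
      (f' := fun t => (g' t - ζ * (g t * Real.sinh t)) * Real.exp (-ζ * Real.cosh t))
      (a := 0) (m := 0)
      ((hgc.mul (Real.continuous_exp.comp
        (continuous_const.mul Real.continuous_cosh))).continuousWithinAt)
      (fun x _ => hF x) iF' (my_tendsto ζ B C hζ g hgb)
    simpa [hg0] using this
  have hsplit : ∫ t in Set.Ioi (0 : ℝ),
      (g' t - ζ * (g t * Real.sinh t)) * Real.exp (-ζ * Real.cosh t)
      = (∫ t in Set.Ioi (0 : ℝ), g' t * Real.exp (-ζ * Real.cosh t))
        - ζ * ∫ t in Set.Ioi (0 : ℝ), (g t * Real.sinh t) * Real.exp (-ζ * Real.cosh t) := by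
    have : (fun t => (g' t - ζ * (g t * Real.sinh t)) * Real.exp (-ζ * Real.cosh t))
        = fun t => g' t * Real.exp (-ζ * Real.cosh t)
            - ζ * ((g t * Real.sinh t) * Real.exp (-ζ * Real.cosh t)) := by
      funext t; ring
    rw [this, integral_sub ig' (igs.const_mul ζ), MeasureTheory.integral_const_mul]
  rw [hsplit] at h0
  linarith

lemma my_iK (ζ ν : ℝ) (hζ : 0 < ζ) (hν : 0 ≤ ν) :
    IntegrableOn (fun t => Real.cosh (ν * t) * Real.exp (-ζ * Real.cosh t)) (Set.Ioi 0) := by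
  refine my_integrable ζ ν 1 hζ _ (Real.continuous_cosh.comp (continuous_const.mul continuous_id))
    fun t ht => ?_
  rw [abs_of_pos (Real.cosh_pos _), one_mul]
  exact my_cosh_le (ν * t) (mul_nonneg hν ht)

lemma my_iK1 (ζ : ℝ) (hζ : 0 < ζ) :
    IntegrableOn (fun t => Real.cosh t * Real.exp (-ζ * Real.cosh t)) (Set.Ioi 0) := by
  simpa using my_iK ζ 1 hζ one_pos.le

/-- Identity (A): `ζ * (K₃ - K₁) = 4 * K₂`. -/
lemma my_recur (ζ : ℝ) (hζ : 0 < ζ) :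
    ζ * ((∫ t in Set.Ioi (0:ℝ), Real.cosh (3*t) * Real.exp (-ζ * Real.cosh t))
        - ∫ t in Set.Ioi (0:ℝ), Real.cosh t * Real.exp (-ζ * Real.cosh t))
      = 4 * ∫ t in Set.Ioi (0:ℝ), Real.cosh (2*t) * Real.exp (-ζ * Real.cosh t) := by
  have hg : ∀ t : ℝ, HasDerivAt (fun t => Real.sinh (2*t)) (2 * Real.cosh (2*t)) t := by
    intro t
    have h1 : HasDerivAt (fun t : ℝ => 2*t) 2 t := by
      simpa using (hasDerivAt_id t).const_mul 2
    have := h1.sinh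
    convert this using 1
    ring
  have hb1 : ∀ t : ℝ, 0 ≤ t → |Real.sinh (2*t)| ≤ 2 * Real.exp (2*t) := by
    intro t ht
    have := (my_abs_sinh_le (2*t)).trans (my_cosh_le (2*t) (by linarith))
    nlinarith [Real.exp_pos (2*t)]
  have hb2 : ∀ t : ℝ, 0 ≤ t → |2 * Real.cosh (2*t)| ≤ 2 * Real.exp (2*t) := by
    intro t ht
    rw [abs_mul, abs_of_pos (Real.cosh_pos _), abs_of_pos (by norm_num : (0:ℝ) < 2)]
    exact mul_le_mul_of_nonneg_left (my_cosh_le (2*t) (by linarith)) (by norm_num)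
  have hibp := my_ibp ζ hζ (fun t => Real.sinh (2*t)) (fun t => 2 * Real.cosh (2*t)) hg
    (by simp) (by continuity) 2 2 (by norm_num) hb1 hb2
  have hL : ∫ t in Set.Ioi (0:ℝ), (2 * Real.cosh (2*t)) * Real.exp (-ζ * Real.cosh t)
      = 2 * ∫ t in Set.Ioi (0:ℝ), Real.cosh (2*t) * Real.exp (-ζ * Real.cosh t) := by
    rw [← MeasureTheory.integral_const_mul]
    congr 1; funext t; ring
  have hpt : ∀ t : ℝ, (Real.sinh (2*t) * Real.sinh t) * Real.exp (-ζ * Real.cosh t)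
      = (1/2) * (Real.cosh (3*t) * Real.exp (-ζ * Real.cosh t)
          - Real.cosh t * Real.exp (-ζ * Real.cosh t)) := by
    intro t
    have h1 : Real.cosh (3*t) = Real.cosh (2*t)*Real.cosh t + Real.sinh (2*t)*Real.sinh t := by
      rw [show (3:ℝ)*t = 2*t + t by ring, Real.cosh_add]
    have h2 : Real.cosh t = Real.cosh (2*t)*Real.cosh t - Real.sinh (2*t)*Real.sinh t := by
      conv_lhs => rw [show t = 2*t - t by ring]
      rw [Real.cosh_sub]
    have h3 : Real.sinh (2*t) * Real.sinh t = (Real.cosh (3*t) - Real.cosh t)/2 := by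
      linarith [h1, h2]
    rw [h3]; ring
  have hR : ∫ t in Set.Ioi (0:ℝ), (Real.sinh (2*t) * Real.sinh t) * Real.exp (-ζ * Real.cosh t)
      = (1/2) * ((∫ t in Set.Ioi (0:ℝ), Real.cosh (3*t) * Real.exp (-ζ * Real.cosh t))
          - ∫ t in Set.Ioi (0:ℝ), Real.cosh t * Real.exp (-ζ * Real.cosh t)) := by
    rw [show (fun t => (Real.sinh (2*t) * Real.sinh t) * Real.exp (-ζ * Real.cosh t))
        = fun t => (1/2) * (Real.cosh (3*t) * Real.exp (-ζ * Real.cosh t)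
            - Real.cosh t * Real.exp (-ζ * Real.cosh t)) from funext hpt]
    rw [MeasureTheory.integral_const_mul,
      MeasureTheory.integral_sub (my_iK ζ 3 hζ (by norm_num)) (my_iK1 ζ hζ)]
  rw [hL, hR] at hibp
  linarith

set_option maxHeartbeats 1000000 in
/-- Inequality (B): `(2ζ+3) K₁ < 2ζ K₂`. -/
lemma my_main (ζ : ℝ) (hζ : 0 < ζ) :
    (2*ζ+3) * (∫ t in Set.Ioi (0:ℝ), Real.cosh t * Real.exp (-ζ * Real.cosh t))
      < 2*ζ * ∫ t in Set.Ioi (0:ℝ), Real.cosh (2*t) * Real.exp (-ζ * Real.cosh t) := by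
  set g : ℝ → ℝ := fun t => 2*(2*Real.cosh t+1)*Real.sinh t/(Real.cosh t+1) with hgdef
  set g' : ℝ → ℝ := fun t => 2*(2*Real.cosh t^2+2*Real.cosh t-1)/(Real.cosh t+1) with hg'def
  set w : ℝ → ℝ := fun t => (Real.cosh t+2)*(Real.cosh t-1)/(Real.cosh t+1) with hwdef
  have hne : ∀ t : ℝ, Real.cosh t + 1 ≠ 0 := fun t => by positivity
  have hg : ∀ t, HasDerivAt g (g' t) t := by
    intro t
    have ha : HasDerivAt (fun t : ℝ => 2*(2*Real.cosh t+1))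
        (2*(2*Real.sinh t)) t := (((Real.hasDerivAt_cosh t).const_mul 2).add_const 1).const_mul 2
    have hnum := ha.mul (Real.hasDerivAt_sinh t)
    have hden : HasDerivAt (fun t : ℝ => Real.cosh t + 1) (Real.sinh t) t :=
      (Real.hasDerivAt_cosh t).add_const 1
    have hq := hnum.div hden (hne t)
    refine hq.congr_deriv (Eq.symm ?_)
    simp only [Pi.mul_apply]
    have hs : Real.sinh t^2 = Real.cosh t^2 - 1 := Real.sinh_sq t
    rw [hg'def]
    rw [div_eq_div_iff (hne t) (by positivity)]
    linear_combination (-2*(Real.cosh t+1)) * hs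
  have hg0 : g 0 = 0 := by simp [hgdef]
  have hg'c : Continuous g' := by
    rw [hg'def]
    exact Continuous.div (by fun_prop) (by fun_prop) hne
  have hgb : ∀ t, 0 ≤ t → |g t| ≤ 6 * Real.exp (1 * t) := by
    intro t ht
    rw [hgdef]
    simp only []
    rw [abs_div, abs_of_pos (by positivity : (0:ℝ) < Real.cosh t + 1),
      div_le_iff₀ (by positivity : (0:ℝ) < Real.cosh t + 1)]
    have h1 : |2*(2*Real.cosh t+1)*Real.sinh t| = 2*(2*Real.cosh t+1)*|Real.sinh t| := by
      rw [abs_mul, abs_of_pos (by nlinarith [Real.cosh_pos t] : (0:ℝ) < 2*(2*Real.cosh t+1))]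
    rw [h1, one_mul]
    nlinarith [my_abs_sinh_le t, my_cosh_le t ht, Real.one_le_cosh t,
      abs_nonneg (Real.sinh t), Real.cosh_pos t]
  have hg'b : ∀ t, 0 ≤ t → |g' t| ≤ 6 * Real.exp (1 * t) := by
    intro t ht
    rw [hg'def]
    simp only []
    have hnn : (0:ℝ) ≤ 2*(2*Real.cosh t^2+2*Real.cosh t-1)/(Real.cosh t+1) := by
      apply div_nonneg _ (by positivity)
      nlinarith [Real.one_le_cosh t]
    rw [abs_of_nonneg hnn, div_le_iff₀ (by positivity : (0:ℝ) < Real.cosh t + 1), one_mul]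
    nlinarith [my_cosh_le t ht, Real.one_le_cosh t]
  have hibp := my_ibp ζ hζ g g' hg hg0 hg'c 1 6 (by norm_num) hgb hg'b
  -- left side:  ∫ g' e = ∫ w e + 3 ∫ cosh e
  have iw : IntegrableOn (fun t => w t * Real.exp (-ζ * Real.cosh t)) (Set.Ioi 0) := by
    refine my_integrable ζ 1 3 hζ w (hwdef ▸ Continuous.div (by fun_prop) (by fun_prop) hne)
      fun t ht => ?_
    rw [hwdef]
    simp only []
    have hnn : (0:ℝ) ≤ (Real.cosh t+2)*(Real.cosh t-1)/(Real.cosh t+1) := by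
      apply div_nonneg _ (by positivity)
      nlinarith [Real.one_le_cosh t]
    rw [abs_of_nonneg hnn, div_le_iff₀ (by positivity : (0:ℝ) < Real.cosh t + 1), one_mul]
    nlinarith [my_cosh_le t ht, Real.one_le_cosh t]
  have hLpt : ∀ t : ℝ, g' t * Real.exp (-ζ * Real.cosh t)
      = w t * Real.exp (-ζ * Real.cosh t) + 3 * (Real.cosh t * Real.exp (-ζ * Real.cosh t)) := by
    intro t
    have : g' t = w t + 3 * Real.cosh t := by
      rw [hg'def, hwdef]
      simp only []
      field_simp
      ring
    rw [this]; ring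
  have hL : ∫ t in Set.Ioi (0:ℝ), g' t * Real.exp (-ζ * Real.cosh t)
      = (∫ t in Set.Ioi (0:ℝ), w t * Real.exp (-ζ * Real.cosh t))
        + 3 * ∫ t in Set.Ioi (0:ℝ), Real.cosh t * Real.exp (-ζ * Real.cosh t) := by
    rw [show (fun t => g' t * Real.exp (-ζ * Real.cosh t))
        = fun t => w t * Real.exp (-ζ * Real.cosh t)
            + 3 * (Real.cosh t * Real.exp (-ζ * Real.cosh t)) from funext hLpt]
    rw [MeasureTheory.integral_add iw ((my_iK1 ζ hζ).const_mul 3),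
      MeasureTheory.integral_const_mul]
  -- right side: ∫ g sinh e = 2 K₂ - 2 K₁
  have hRpt : ∀ t : ℝ, (g t * Real.sinh t) * Real.exp (-ζ * Real.cosh t)
      = 2 * (Real.cosh (2*t) * Real.exp (-ζ * Real.cosh t))
        - 2 * (Real.cosh t * Real.exp (-ζ * Real.cosh t)) := by
    intro t
    have hs : Real.sinh t^2 = Real.cosh t^2 - 1 := Real.sinh_sq t
    have h2 : Real.cosh (2*t) = Real.cosh t^2 + Real.sinh t^2 := Real.cosh_two_mul t
    have key : g t * Real.sinh t = 2 * Real.cosh (2*t) - 2 * Real.cosh t := by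
      rw [hgdef]
      simp only []
      rw [div_mul_eq_mul_div, div_eq_iff (hne t)]
      linear_combination (-2*(Real.cosh t+1))*h2 + (2*Real.cosh t)*hs
    rw [key]; ring
  have hR : ∫ t in Set.Ioi (0:ℝ), (g t * Real.sinh t) * Real.exp (-ζ * Real.cosh t)
      = 2 * (∫ t in Set.Ioi (0:ℝ), Real.cosh (2*t) * Real.exp (-ζ * Real.cosh t))
        - 2 * ∫ t in Set.Ioi (0:ℝ), Real.cosh t * Real.exp (-ζ * Real.cosh t) := by
    rw [show (fun t => (g t * Real.sinh t) * Real.exp (-ζ * Real.cosh t))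
        = fun t => 2 * (Real.cosh (2*t) * Real.exp (-ζ * Real.cosh t))
            - 2 * (Real.cosh t * Real.exp (-ζ * Real.cosh t)) from funext hRpt]
    rw [MeasureTheory.integral_sub ((my_iK ζ 2 hζ (by norm_num)).const_mul 2)
      ((my_iK1 ζ hζ).const_mul 2), MeasureTheory.integral_const_mul,
      MeasureTheory.integral_const_mul]
  -- positivity of ∫ w e
  have hwpos : 0 < ∫ t in Set.Ioi (0:ℝ), w t * Real.exp (-ζ * Real.cosh t) := by
    refine my_int_pos ζ w (fun t => ?_) (fun t ht => ?_) iw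
    · rw [hwdef]; simp only []
      apply div_nonneg _ (by positivity)
      nlinarith [Real.one_le_cosh t]
    · rw [hwdef]; simp only []
      have h1 : 1 < Real.cosh t := Real.one_lt_cosh.2 (ne_of_gt ht)
      apply div_pos (by nlinarith) (by positivity)
  rw [hL, hR] at hibp
  nlinarith [hibp, hwpos]


/-- Modified Bessel function of the second kind,
`K_ν(ζ) = ∫₀^∞ cosh(νt)·exp(−ζ·cosh t) dt`. -/
noncomputable def besselK (ν ζ : ℝ) : ℝ :=
  ∫ t in Set.Ioi (0 : ℝ), Real.cosh (ν * t) * Real.exp (-ζ * Real.cosh t)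

theorem stmt4 : ∀ ζ : ℝ, 0 < ζ →
    (2 + 3 / ζ) * (besselK 3 ζ / besselK 2 ζ) < 2 * (1 + 4 / ζ + 6 / ζ ^ 2) := by
  intro ζ hζ
  have hζ' : ζ ≠ 0 := ne_of_gt hζ
  set K1 : ℝ := ∫ t in Set.Ioi (0:ℝ), Real.cosh t * Real.exp (-ζ * Real.cosh t) with hK1
  have hK3 : besselK 3 ζ = ∫ t in Set.Ioi (0:ℝ), Real.cosh (3*t) * Real.exp (-ζ * Real.cosh t) :=
    rfl
  have hK2 : besselK 2 ζ = ∫ t in Set.Ioi (0:ℝ), Real.cosh (2*t) * Real.exp (-ζ * Real.cosh t) :=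
    rfl
  have hK2pos : 0 < besselK 2 ζ := by
    rw [hK2]
    exact my_int_pos ζ _ (fun t => (Real.cosh_pos _).le) (fun t _ => Real.cosh_pos _)
      (my_iK ζ 2 hζ (by norm_num))
  have hA : ζ * (besselK 3 ζ - K1) = 4 * besselK 2 ζ := by
    rw [hK3, hK2, hK1]; exact my_recur ζ hζ
  have hB : (2*ζ+3) * K1 < 2*ζ * besselK 2 ζ := by
    rw [hK1, hK2]; exact my_main ζ hζ
  have h1 : ζ * besselK 3 ζ = ζ * K1 + 4 * besselK 2 ζ := by linear_combination hA
  have key : (2*ζ+3) * (ζ * besselK 3 ζ) < (2*ζ^2+8*ζ+12) * besselK 2 ζ := by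
    rw [h1]
    nlinarith [mul_lt_mul_of_pos_left hB hζ]
  have e1 : ζ^2 * ((2 + 3 / ζ) * (besselK 3 ζ / besselK 2 ζ) * besselK 2 ζ)
      = (2*ζ+3) * (ζ * besselK 3 ζ) := by
    field_simp
  have e2 : ζ^2 * (2 * (1 + 4 / ζ + 6 / ζ ^ 2) * besselK 2 ζ)
      = (2*ζ^2+8*ζ+12) * besselK 2 ζ := by
    field_simp
    ring
  have h3 : ζ^2 * ((2 + 3 / ζ) * (besselK 3 ζ / besselK 2 ζ) * besselK 2 ζ)
      < ζ^2 * (2 * (1 + 4 / ζ + 6 / ζ ^ 2) * besselK 2 ζ) := by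
    rw [e1, e2]; exact key
  have h5 : (2 + 3 / ζ) * (besselK 3 ζ / besselK 2 ζ) * besselK 2 ζ
      < 2 * (1 + 4 / ζ + 6 / ζ ^ 2) * besselK 2 ζ :=
    (mul_lt_mul_iff_right₀ (by positivity : (0:ℝ) < ζ^2)).mp h3
  exact (mul_lt_mul_iff_left₀ hK2pos).mp h5
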